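/- (Decrease of the K-perimeter under thresholding) Let K be a suitable convolution kernel on ℝ^d and let E₀ be locally K-outward minimizing in Ω, and set E₁ := T_K E₀. Then P_K(E₁) + S_K(E₀ \ E₁) ≤ P_K(E₀). -/

import Mathlib

open MeasureTheory
open scoped ENNReal

/-- The convolution of a kernel `K` with the indicator function of a set `E`. -/
noncomputable def conv {d : ℕ} (K : EuclideanSpace ℝ (Fin d) → ℝ)
    (E : Set (EuclideanSpace ℝ (Fin d))) (x : EuclideanSpace ℝ (Fin d)) : ℝ :=
  ∫ y, K (x - y) * E.indicator (fun _ => (1 : ℝ)) y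

/-- The thresholding operator `T_K E = {x | (K ∗ χ_E)(x) > 1/2}`. -/
def thresh {d : ℕ} (K : EuclideanSpace ℝ (Fin d) → ℝ)
    (E : Set (EuclideanSpace ℝ (Fin d))) : Set (EuclideanSpace ℝ (Fin d)) :=
  {x | 1 / 2 < conv K E x}

/-- The `K`-perimeter `P_K(D) = ∫_{Dᶜ} K ∗ χ_D`, as a value in `[0,∞]`. -/
noncomputable def PK {d : ℕ} (K : EuclideanSpace ℝ (Fin d) → ℝ)
    (D : Set (EuclideanSpace ℝ (Fin d))) : ℝ≥0∞ :=
  ∫⁻ x in Dᶜ, ENNReal.ofReal (conv K D x)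

/-- The self-interaction `S_K(D) = ∫_D K ∗ χ_D`, as a value in `[0,∞]`. -/
noncomputable def SK {d : ℕ} (K : EuclideanSpace ℝ (Fin d) → ℝ)
    (D : Set (EuclideanSpace ℝ (Fin d))) : ℝ≥0∞ :=
  ∫⁻ x in D, ENNReal.ofReal (conv K D x)

/-- `E₀` is locally `K`-outward minimizing in `Ω`: `E₀` is a measurable subset of `Ω` with
    finite `K`-perimeter, `Ω` is sufficiently large (`Ω ⊇ T_K E₀ ∪ E₀`), and
    `P_K(E₀ ∪ F) + S_K(F) ≥ P_K(E₀)` for all measurable `F ⊆ Ω \ E₀`. -/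
def LocallyOutwardMin {d : ℕ} (K : EuclideanSpace ℝ (Fin d) → ℝ)
    (E₀ Ω : Set (EuclideanSpace ℝ (Fin d))) : Prop :=
  MeasurableSet E₀ ∧ E₀ ⊆ Ω ∧ PK K E₀ ≠ ⊤ ∧ thresh K E₀ ∪ E₀ ⊆ Ω ∧
  ∀ F : Set (EuclideanSpace ℝ (Fin d)), MeasurableSet F → F ⊆ Ω \ E₀ →
    PK K E₀ ≤ PK K (E₀ ∪ F) + SK K F

section Aux
variable {d : ℕ} {K : EuclideanSpace ℝ (Fin d) → ℝ}

noncomputable def II (K : EuclideanSpace ℝ (Fin d) → ℝ)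
    (X Y : Set (EuclideanSpace ℝ (Fin d))) : ℝ≥0∞ :=
  ∫⁻ x in X, ∫⁻ y in Y, ENNReal.ofReal (K (x - y))

lemma kermeas (hm : Measurable K) :
    Measurable (fun p : (EuclideanSpace ℝ (Fin d)) × (EuclideanSpace ℝ (Fin d)) =>
      ENNReal.ofReal (K (p.1 - p.2))) :=
  ENNReal.measurable_ofReal.comp (hm.comp (measurable_fst.sub measurable_snd))

lemma innerMeas (hm : Measurable K) (Y : Set (EuclideanSpace ℝ (Fin d))) :
    Measurable fun x => ∫⁻ y in Y, ENNReal.ofReal (K (x - y)) :=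
  Measurable.lintegral_prod_right (f := fun x y => ENNReal.ofReal (K (x - y))) (kermeas hm)

lemma ofReal_conv (hK0 : ∀ x, 0 ≤ K x) (hKint : Integrable K)
    {E : Set (EuclideanSpace ℝ (Fin d))} (hE : MeasurableSet E) (x : EuclideanSpace ℝ (Fin d)) :
    ENNReal.ofReal (conv K E x) = ∫⁻ y in E, ENNReal.ofReal (K (x - y)) := by
  have h1 : conv K E x = ∫ y in E, K (x - y) := by
    rw [conv, ← integral_indicator hE]
    congr 1; funext y
    by_cases hy : y ∈ E <;> simp [hy]
  rw [h1, ofReal_integral_eq_lintegral_ofReal ((hKint.comp_sub_left x).restrict)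
    (Filter.Eventually.of_forall fun y => hK0 _)]

lemma lint_total (hm : Measurable K) (hK0 : ∀ x, 0 ≤ K x) (hKint : Integrable K)
    (hK1 : ∫ x, K x = 1) (x : EuclideanSpace ℝ (Fin d)) :
    ∫⁻ y, ENNReal.ofReal (K (x - y)) = 1 := by
  rw [(Measure.measurePreserving_sub_left volume x).lintegral_comp
      (f := fun z => ENNReal.ofReal (K z)) hm.ennreal_ofReal,
    ← ofReal_integral_eq_lintegral_ofReal hKint (Filter.Eventually.of_forall hK0), hK1,
    ENNReal.ofReal_one]

lemma lint_split (hm : Measurable K) (hK0 : ∀ x, 0 ≤ K x) (hKint : Integrable K)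
    (hK1 : ∫ x, K x = 1) {E : Set (EuclideanSpace ℝ (Fin d))} (hE : MeasurableSet E)
    (x : EuclideanSpace ℝ (Fin d)) :
    (∫⁻ y in E, ENNReal.ofReal (K (x - y))) + ∫⁻ y in Eᶜ, ENNReal.ofReal (K (x - y)) = 1 := by
  rw [lintegral_add_compl _ hE, lint_total hm hK0 hKint hK1]

lemma II_symm (hm : Measurable K) (heven : ∀ x, K (-x) = K x)
    {X Y : Set (EuclideanSpace ℝ (Fin d))} :
    II K X Y = II K Y X := by
  have hpt : ∀ x y : EuclideanSpace ℝ (Fin d), K (x - y) = K (y - x) := fun x y => by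
    rw [← heven (y - x), neg_sub]
  unfold II
  calc ∫⁻ x in X, ∫⁻ y in Y, ENNReal.ofReal (K (x - y))
      = ∫⁻ x in X, ∫⁻ y in Y, ENNReal.ofReal (K (y - x)) := by simp_rw [hpt]
    _ = ∫⁻ y in Y, ∫⁻ x in X, ENNReal.ofReal (K (y - x)) :=
        lintegral_lintegral_swap ((ENNReal.measurable_ofReal.comp
          (hm.comp (measurable_snd.sub measurable_fst))).aemeasurable)

lemma II_union_right (hm : Measurable K) {Y Z : Set (EuclideanSpace ℝ (Fin d))}
    (hZ : MeasurableSet Z) (hdisj : Disjoint Y Z) (X : Set (EuclideanSpace ℝ (Fin d))) :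
    II K X (Y ∪ Z) = II K X Y + II K X Z := by
  unfold II
  calc ∫⁻ x in X, ∫⁻ y in Y ∪ Z, ENNReal.ofReal (K (x - y))
      = ∫⁻ x in X, ((∫⁻ y in Y, ENNReal.ofReal (K (x - y)))
          + ∫⁻ y in Z, ENNReal.ofReal (K (x - y))) :=
        lintegral_congr fun x => lintegral_union hZ hdisj
    _ = _ := lintegral_add_left (innerMeas hm Y) _

lemma II_union_left {X Y Z : Set (EuclideanSpace ℝ (Fin d))}
    (hY : MeasurableSet Y) (hdisj : Disjoint X Y) :
    II K (X ∪ Y) Z = II K X Z + II K Y Z :=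
  lintegral_union hY hdisj

lemma II_mono_left {X X' Y : Set (EuclideanSpace ℝ (Fin d))} (hXX : X ⊆ X') :
    II K X Y ≤ II K X' Y :=
  lintegral_mono_set hXX

lemma PK_eq_II (hK0 : ∀ x, 0 ≤ K x) (hKint : Integrable K)
    {D : Set (EuclideanSpace ℝ (Fin d))} (hD : MeasurableSet D) :
    PK K D = II K Dᶜ D :=
  lintegral_congr fun x => ofReal_conv hK0 hKint hD x

lemma SK_eq_II (hK0 : ∀ x, 0 ≤ K x) (hKint : Integrable K)
    {D : Set (EuclideanSpace ℝ (Fin d))} (hD : MeasurableSet D) :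
    SK K D = II K D D :=
  lintegral_congr fun x => ofReal_conv hK0 hKint hD x

lemma main_meas (hm : Measurable K) (hK0 : ∀ x, 0 ≤ K x) (heven : ∀ x, K (-x) = K x)
    (hKint : Integrable K) (hK1 : ∫ x, K x = 1)
    (E₀ Ω : Set (EuclideanSpace ℝ (Fin d))) (h : LocallyOutwardMin K E₀ Ω) :
    PK K (thresh K E₀) + SK K (E₀ \ thresh K E₀) ≤ PK K E₀ := by
  obtain ⟨hE₀, hE₀Ω, hfin, hthreshΩ, hmin⟩ := h
  set c : ℝ≥0∞ := ENNReal.ofReal (1 / 2) with hc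
  have hcc : c + c = 1 := by
    rw [hc, ← ENNReal.ofReal_add (by norm_num) (by norm_num)]
    norm_num
  have hcne : c ≠ ⊤ := ENNReal.ofReal_ne_top
  -- characterization of thresh via the inner lintegral
  have hmem : ∀ x, x ∈ thresh K E₀ ↔ c < ∫⁻ y in E₀, ENNReal.ofReal (K (x - y)) := by
    intro x
    rw [← ofReal_conv hK0 hKint hE₀ x, hc,
      ENNReal.ofReal_lt_ofReal_iff_of_nonneg (by norm_num)]
    rfl
  have hThreshMeas : MeasurableSet (thresh K E₀) := by
    have : thresh K E₀ = {x | c < ∫⁻ y in E₀, ENNReal.ofReal (K (x - y))} :=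
      Set.ext fun x => hmem x
    rw [this]
    exact measurableSet_lt measurable_const (innerMeas hm E₀)
  -- from a + b = 1 and a ≤ c: a ≤ b ; and from c < a: b < c
  have hab_le : ∀ a b : ℝ≥0∞, a + b = 1 → a ≤ c → a ≤ b := by
    intro a b hab ha
    have hcb : c ≤ b := by
      have : c + c ≤ c + b := by rw [hcc, ← hab]; exact add_le_add_left ha b
      exact (ENNReal.add_le_add_iff_left hcne).1 this
    exact ha.trans hcb
  have hab_lt : ∀ a b : ℝ≥0∞, a + b = 1 → c < a → b < c := by
    intro a b hab ha
    by_contra hcb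
    push_neg at hcb
    have hbne : b ≠ ⊤ := by
      intro hb; rw [hb, add_top] at hab; exact (by simp : (⊤:ℝ≥0∞) ≠ 1) hab
    have : c + b < a + b := ENNReal.add_lt_add_right hbne ha
    rw [hab, ← hcc] at this
    exact absurd (add_le_add_right hcb c) (not_le.2 this)
  -- Step 1 : thresh \ E₀ is null
  set F : Set (EuclideanSpace ℝ (Fin d)) := thresh K E₀ \ E₀ with hFdef
  have hF : MeasurableSet F := hThreshMeas.diff hE₀
  have hFE₀ : Disjoint E₀ F := Set.disjoint_sdiff_right.mono_left le_rfl
  have hFsub : F ⊆ Ω \ E₀ := fun x hx =>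
    ⟨hthreshΩ (Set.mem_union_left _ hx.1), hx.2⟩
  have key := hmin F hF hFsub
  have hFnull : volume F = 0 := by
    by_contra hpos
    have hFc : F ⊆ E₀ᶜ := fun x hx => hx.2
    have hGc : (E₀ ∪ F)ᶜ ∪ F = E₀ᶜ := by
      rw [Set.compl_union, ← Set.diff_eq, Set.diff_union_self,
        Set.union_eq_self_of_subset_right hFc]
    have hdisj1 : Disjoint ((E₀ ∪ F)ᶜ) F := by
      rw [Set.compl_union]
      exact Set.disjoint_of_subset_left Set.inter_subset_right disjoint_compl_left
    have e1 : PK K E₀ = II K ((E₀ ∪ F)ᶜ) E₀ + II K F E₀ := by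
      rw [PK_eq_II hK0 hKint hE₀, ← hGc, II_union_left hF hdisj1]
    have e2 : PK K (E₀ ∪ F) + SK K F = II K ((E₀ ∪ F)ᶜ) E₀ + II K F E₀ᶜ := by
      have h1 : PK K (E₀ ∪ F) = II K ((E₀ ∪ F)ᶜ) E₀ + II K ((E₀ ∪ F)ᶜ) F := by
        rw [PK_eq_II hK0 hKint (hE₀.union hF), II_union_right hm hF hFE₀]
      have h2 : II K ((E₀ ∪ F)ᶜ) F + II K F F = II K F E₀ᶜ := by
        rw [II_symm hm heven (X := (E₀ ∪ F)ᶜ) (Y := F),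
          ← II_union_right hm hF hdisj1 F, hGc]
      rw [h1, SK_eq_II hK0 hKint hF, add_assoc, h2]
    rw [e1, e2] at key
    have hcommfin : II K ((E₀ ∪ F)ᶜ) E₀ ≠ ⊤ := by
      refine ne_top_of_le_ne_top ?_ (II_mono_left (X' := E₀ᶜ) (Set.compl_subset_compl.2
        Set.subset_union_left))
      rw [← PK_eq_II hK0 hKint hE₀]; exact hfin
    have key2 : II K F E₀ ≤ II K F E₀ᶜ := (ENNReal.add_le_add_iff_left hcommfin).1 key
    have hptF : ∀ x ∈ F, (∫⁻ y in E₀ᶜ, ENNReal.ofReal (K (x - y)))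
        < ∫⁻ y in E₀, ENNReal.ofReal (K (x - y)) := by
      intro x hx
      have h1 := (hmem x).1 hx.1
      have h2 := hab_lt _ _ (lint_split hm hK0 hKint hK1 hE₀ x) h1
      exact h2.trans h1
    have hae : ∀ᵐ x ∂(volume.restrict F), (∫⁻ y in E₀ᶜ, ENNReal.ofReal (K (x - y)))
        < ∫⁻ y in E₀, ENNReal.ofReal (K (x - y)) :=
      (ae_restrict_iff' hF).2 (Filter.Eventually.of_forall hptF)
    have hμne : volume.restrict F ≠ 0 := by
      rw [Ne, Measure.restrict_eq_zero]; exact hpos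
    have hIFE₀fin : II K F E₀ ≠ ⊤ := by
      refine ne_top_of_le_ne_top ?_ (II_mono_left (X' := E₀ᶜ) hFc)
      rw [← PK_eq_II hK0 hKint hE₀]; exact hfin
    have hfinsmall : (∫⁻ x in F, ∫⁻ y in E₀ᶜ, ENNReal.ofReal (K (x - y))) ≠ ⊤ :=
      ne_top_of_le_ne_top hIFE₀fin (lintegral_mono_ae (hae.mono fun x hx => hx.le))
    have := lintegral_strict_mono hμne (innerMeas hm E₀).aemeasurable hfinsmall hae
    exact absurd key2 (not_le.2 this)
  -- Step 2 : replace thresh by A = thresh ∩ E₀ and conclude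
  set A : Set (EuclideanSpace ℝ (Fin d)) := thresh K E₀ ∩ E₀ with hAdef
  have hA : MeasurableSet A := hThreshMeas.inter hE₀
  have hAe : thresh K E₀ =ᵐ[volume] A := by
    rw [MeasureTheory.ae_eq_set]
    constructor
    · rw [Set.diff_self_inter]; exact hFnull
    · have he : (thresh K E₀ ∩ E₀) \ thresh K E₀ = ∅ := by
        rw [Set.diff_eq_empty]; exact Set.inter_subset_left
      rw [hAdef, he]; simp
  have hAeS : ∀ᵐ y, y ∈ thresh K E₀ ↔ y ∈ A := Filter.eventuallyEq_set.1 hAe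
  have hAec : (thresh K E₀)ᶜ =ᵐ[volume] Aᶜ :=
    Filter.eventuallyEq_set.2 (hAeS.mono fun x hx => not_congr hx)
  have hconvA : ∀ z, conv K (thresh K E₀) z = conv K A z := by
    intro z
    refine integral_congr_ae ?_
    filter_upwards [hAeS] with y hy
    by_cases h1 : y ∈ thresh K E₀
    · simp [h1, hy.1 h1]
    · have h2 : y ∉ A := fun h2 => h1 (hy.2 h2)
      simp [h1, h2]
  have hPKeq : PK K (thresh K E₀) = PK K A := by
    unfold PK
    refine (setLIntegral_congr hAec).trans ?_
    exact lintegral_congr fun x => by rw [hconvA x]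
  have hDiff : E₀ \ thresh K E₀ = E₀ \ A := by
    rw [hAdef, Set.diff_inter_self_eq_diff]
  rw [hPKeq, hDiff]
  -- now prove PK K A + SK K (E₀ \ A) ≤ PK K E₀
  set D : Set (EuclideanSpace ℝ (Fin d)) := E₀ \ A with hDdef
  have hD : MeasurableSet D := hE₀.diff hA
  have hAE : A ⊆ E₀ := Set.inter_subset_right
  have hAD : Disjoint A D := Set.disjoint_sdiff_right
  have hunion : A ∪ D = E₀ := Set.union_diff_cancel hAE
  have hDE₀ : D ⊆ E₀ := Set.diff_subset
  have hdisjE₀cD : Disjoint E₀ᶜ D := disjoint_compl_left.mono_right hDE₀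
  have hAcompl : Aᶜ = E₀ᶜ ∪ D := by
    ext x
    simp only [Set.mem_compl_iff, Set.mem_union, hDdef, Set.mem_diff]
    by_cases hx : x ∈ E₀ <;> simp [hx] <;> tauto
  have p0 : PK K E₀ = II K E₀ᶜ A + II K E₀ᶜ D := by
    rw [PK_eq_II hK0 hKint hE₀, ← hunion, II_union_right hm hD hAD]
  have pA : PK K A = II K E₀ᶜ A + II K D A := by
    rw [PK_eq_II hK0 hKint hA, hAcompl, II_union_left hD hdisjE₀cD]
  have central : II K D A + II K D D ≤ II K E₀ᶜ D := by
    have h1 : II K D A + II K D D = II K D E₀ := by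
      rw [← II_union_right hm hD hAD D, hunion]
    rw [h1, II_symm hm heven (X := E₀ᶜ) (Y := D)]
    refine lintegral_mono_ae ((ae_restrict_iff' hD).2 (Filter.Eventually.of_forall
      fun x hx => ?_))
    have hxnt : x ∉ thresh K E₀ := fun ht => hx.2 ⟨ht, hx.1⟩
    have hle : (∫⁻ y in E₀, ENNReal.ofReal (K (x - y))) ≤ c := not_lt.1 fun hlt =>
      hxnt ((hmem x).2 hlt)
    exact hab_le _ _ (lint_split hm hK0 hKint hK1 hE₀ x) hle
  calc PK K A + SK K D = II K E₀ᶜ A + (II K D A + II K D D) := by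
        rw [pA, SK_eq_II hK0 hKint hD, add_assoc]
    _ ≤ II K E₀ᶜ A + II K E₀ᶜ D := add_le_add_right central _
    _ = PK K E₀ := p0.symm


end Aux

/-- Decrease of the `K`-perimeter under thresholding: if `E₀` is locally `K`-outward
    minimizing in `Ω` and `E₁ = T_K E₀`, then `P_K(E₁) + S_K(E₀ \ E₁) ≤ P_K(E₀)`. -/
theorem PK_decreases_under_thresholding
    {d : ℕ} (K : EuclideanSpace ℝ (Fin d) → ℝ)
    (hK0 : ∀ x, 0 ≤ K x) (hKeven : ∀ x, K (-x) = K x)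
    (hKint : Integrable K) (hK1 : ∫ x, K x = 1)
    (E₀ Ω : Set (EuclideanSpace ℝ (Fin d)))
    (h : LocallyOutwardMin K E₀ Ω) :
    PK K (thresh K E₀) + SK K (E₀ \ thresh K E₀) ≤ PK K E₀ := by
  classical
  set K₁ : EuclideanSpace ℝ (Fin d) → ℝ := hKint.1.mk K with hK₁def
  have hK₁m : Measurable K₁ := hKint.1.stronglyMeasurable_mk.measurable
  have hK₁ae : K =ᵐ[volume] K₁ := hKint.1.ae_eq_mk
  set K' : EuclideanSpace ℝ (Fin d) → ℝ :=
    fun z => max 0 (min (K₁ z) (K₁ (-z))) with hK'def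
  have hm' : Measurable K' :=
    measurable_const.max (hK₁m.min (hK₁m.comp measurable_neg))
  have hK'0 : ∀ z, 0 ≤ K' z := fun z => le_max_left _ _
  have heven' : ∀ z, K' (-z) = K' z := fun z => by
    simp only [hK'def, neg_neg]
    rw [min_comm]
  have hneg : (fun z => K₁ (-z)) =ᵐ[volume] K := by
    have h1 : K₁ ∘ (fun z : EuclideanSpace ℝ (Fin d) => -z) =ᵐ[volume]
        K ∘ (fun z : EuclideanSpace ℝ (Fin d) => -z) :=
      (Measure.measurePreserving_neg
        (volume : Measure (EuclideanSpace ℝ (Fin d)))).quasiMeasurePreserving.ae_eq_comp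
        hK₁ae.symm
    refine h1.trans (Filter.Eventually.of_forall fun z => ?_)
    exact hKeven z
  have hae : K' =ᵐ[volume] K := by
    filter_upwards [hK₁ae, hneg] with z h1z h2z
    rw [hK'def]
    simp only
    rw [← h1z, h2z, min_self, max_eq_right (hK0 z)]
  have hKint' : Integrable K' := hKint.congr hae.symm
  have hK1' : ∫ x, K' x = 1 := by rw [integral_congr_ae hae, hK1]
  have hconv : conv K' = conv K := by
    funext E x
    refine integral_congr_ae ?_
    have h1 : K' ∘ (fun y : EuclideanSpace ℝ (Fin d) => x - y) =ᵐ[volume]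
        K ∘ (fun y : EuclideanSpace ℝ (Fin d) => x - y) :=
      ((Measure.measurePreserving_sub_left
        (volume : Measure (EuclideanSpace ℝ (Fin d))) x)).quasiMeasurePreserving.ae_eq_comp hae
    filter_upwards [h1] with y hy
    simp only [Function.comp] at hy
    rw [hy]
  have hthresh : thresh K' = thresh K := by
    funext E
    unfold thresh
    rw [hconv]
  have hPK : PK K' = PK K := by
    funext D
    unfold PK
    rw [hconv]
  have hSK : SK K' = SK K := by
    funext D
    unfold SK
    rw [hconv]
  have h' : LocallyOutwardMin K' E₀ Ω := by
    unfold LocallyOutwardMin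
    rw [hPK, hSK, hthresh]
    exact h
  have := main_meas hm' hK'0 heven' hKint' hK1' E₀ Ω h'
  rwa [hPK, hSK, hthresh] at this
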